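/- The coproduct Δ_list is coassociative: (Δ_list ⊗ id) ∘ Δ_list = (id ⊗ Δ_list) ∘ Δ_list as linear maps k⟨L⟩ → k⟨L⟩ ⊗_k k⟨L⟩ ⊗_k k⟨L⟩. -/

import Mathlib

open scoped TensorProduct

/-- A monomial: a nonzero finitely supported multi-index with support contained in `{1,2,…}`. -/
def Mon : Type := {m : ℕ →₀ ℕ // m ≠ 0 ∧ m 0 = 0}

namespace Mon

/-- Product of monomials: pointwise addition of multi-indices. -/
noncomputable instance : Mul Mon :=
  ⟨fun a b =>
    ⟨a.1 + b.1, by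
      constructor
      · intro h
        exact a.2.1 ((add_eq_zero.mp h).1)
      · simp [Finsupp.add_apply, a.2.2, b.2.2]⟩⟩

/-- The total degree (weight) of a monomial. -/
def w (m : Mon) : ℕ := m.1.sum fun _ v => v

/-- The set of variable indices occurring in a list of monomials. -/
def IndAlph (l : List Mon) : Finset ℕ := (l.map fun m => m.1.support).foldr (· ∪ ·) ∅

/-- The maximal variable index occurring in a list of monomials (`0` for the empty list). -/
def maxInd (l : List Mon) : ℕ := (IndAlph l).sup id

/-- The embedding `i ↦ i + p` of `ℕ` into itself. -/
def addEmb (p : ℕ) : ℕ ↪ ℕ := ⟨fun i => i + p, fun a b h => by simpa using h⟩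

/-- The shift `T_p` of a monomial: translate the support by `p`. -/
noncomputable def Tmon (p : ℕ) (m : Mon) : Mon :=
  ⟨m.1.embDomain (addEmb p), by
    refine ⟨fun h => m.2.1 (Finsupp.embDomain_eq_zero.mp h), ?_⟩
    by_cases hp : p = 0
    · subst hp
      have h0 : (Finsupp.embDomain (addEmb 0) m.1) ((addEmb 0) 0) = m.1 0 :=
        Finsupp.embDomain_apply_self _ _ _
      simpa [addEmb] using h0.trans m.2.2
    · apply Finsupp.embDomain_notin_range
      rintro ⟨i, hi⟩
      have hi' : i + p = 0 := hi
      simp only [addEmb, Function.Embedding.coeFn_mk] at hi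
      omega⟩

/-- Shifted concatenation of lists of monomials. -/
noncomputable def sconc (l₁ l₂ : List Mon) : List Mon := l₁ ++ l₂.map (Tmon (maxInd l₁))

/-- A list of monomials is compact when its alphabet has no holes:
`IndAlph l = {1,…,card (IndAlph l)}`. -/
def Compact (l : List Mon) : Prop := IndAlph l = Finset.Icc 1 (IndAlph l).card

/-- The re-indexing function of a list `l` : on `IndAlph l` it is the unique strictly
increasing bijection onto `{1,…,card (IndAlph l)}` (extended injectively elsewhere). -/
noncomputable def phi (l : List Mon) (i : ℕ) : ℕ :=
  if h : i ∈ IndAlph l then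
    (((IndAlph l).orderIsoOfFin rfl).symm ⟨i, h⟩ : Fin (IndAlph l).card) + 1
  else i + (IndAlph l).card + 1

lemma phi_pos (l : List Mon) (i : ℕ) : 1 ≤ phi l i := by
  unfold phi; split_ifs <;> omega

lemma phi_inj (l : List Mon) : Function.Injective (phi l) := by
  intro a b hab
  unfold phi at hab
  split_ifs at hab with ha hb hb
  · have h1 : (((IndAlph l).orderIsoOfFin rfl).symm ⟨a, ha⟩) =
        (((IndAlph l).orderIsoOfFin rfl).symm ⟨b, hb⟩) := Fin.ext (by omega)
    have h2 := congrArg ((IndAlph l).orderIsoOfFin rfl) h1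
    rw [OrderIso.apply_symm_apply, OrderIso.apply_symm_apply] at h2
    exact congrArg Subtype.val h2
  · have := (((IndAlph l).orderIsoOfFin rfl).symm ⟨a, ha⟩).isLt; omega
  · have := (((IndAlph l).orderIsoOfFin rfl).symm ⟨b, hb⟩).isLt; omega
  · omega

/-- Action of the compacting operator of `l` on a single monomial. -/
noncomputable def cptMon (l : List Mon) (m : Mon) : Mon :=
  ⟨m.1.mapDomain (phi l), by
    constructor
    · intro h
      apply m.2.1
      exact Finsupp.mapDomain_injective (phi_inj l) (by simpa using h)
    · apply Finsupp.mapDomain_notin_range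
      rintro ⟨i, hi⟩
      have := phi_pos l i
      omega⟩

/-- The compacting operator on lists of monomials. -/
noncomputable def cpt (l : List Mon) : List Mon := l.map (cptMon l)

/-- `sub l I` is the sublist of `l` consisting of the entries whose (1-based) position
belongs to `I`. -/
def sub (l : List Mon) (I : Finset ℕ) : List Mon :=
  (List.range l.length).filterMap fun j => if j + 1 ∈ I then l[j]? else none

/-- `∗̄`-irreducible lists: nonempty and with no factorization into two nonempty lists. -/
def SIrred (l : List Mon) : Prop :=
  l ≠ [] ∧ ∀ u v : List Mon, l = sconc u v → u = [] ∨ v = []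


/-! ### Auxiliary lemmas -/

open Finset

lemma IndAlph_nil : IndAlph [] = ∅ := rfl

lemma IndAlph_cons (a : Mon) (l : List Mon) : IndAlph (a :: l) = a.1.support ∪ IndAlph l := rfl

lemma mem_IndAlph {i : ℕ} {l : List Mon} : i ∈ IndAlph l ↔ ∃ m ∈ l, i ∈ m.1.support := by
  induction l with
  | nil => simp [IndAlph_nil]
  | cons a l ih => simp [IndAlph_cons, Finset.mem_union, ih]

lemma IndAlph_subset {l₁ l₂ : List Mon} (h : ∀ m ∈ l₁, m ∈ l₂) : IndAlph l₁ ⊆ IndAlph l₂ := by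
  intro i hi
  rw [mem_IndAlph] at hi ⊢
  obtain ⟨m, hm, hi⟩ := hi
  exact ⟨m, h m hm, hi⟩

lemma cptMon_support (l : List Mon) (m : Mon) :
    (cptMon l m).1.support = m.1.support.image (phi l) :=
  Finsupp.mapDomain_support_of_injective (phi_inj l) _

lemma IndAlph_map_cptMon (l₀ : List Mon) (l' : List Mon) :
    IndAlph (l'.map (cptMon l₀)) = (IndAlph l').image (phi l₀) := by
  induction l' with
  | nil => simp [IndAlph_nil]
  | cons a l ih =>
    rw [List.map_cons, IndAlph_cons, IndAlph_cons, ih, cptMon_support, Finset.image_union]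

lemma phi_mem_Icc {l : List Mon} {i : ℕ} (h : i ∈ IndAlph l) :
    phi l i ∈ Finset.Icc 1 (IndAlph l).card := by
  rw [phi, dif_pos h, Finset.mem_Icc]
  have := (((IndAlph l).orderIsoOfFin rfl).symm ⟨i, h⟩).isLt
  omega

lemma phi_strictMonoOn (l : List Mon) : StrictMonoOn (phi l) (IndAlph l) := by
  intro a ha b hb hab
  rw [Finset.mem_coe] at ha hb
  rw [phi, dif_pos ha, phi, dif_pos hb]
  have hlt : ((IndAlph l).orderIsoOfFin rfl).symm ⟨a, ha⟩
      < ((IndAlph l).orderIsoOfFin rfl).symm ⟨b, hb⟩ :=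
    ((IndAlph l).orderIsoOfFin rfl).symm.strictMono (Subtype.mk_lt_mk.mpr hab)
  have := Fin.lt_def.mp hlt
  omega

lemma eqOn_strictMonoOn (S : Finset ℕ) (f g : ℕ → ℕ)
    (hf : StrictMonoOn f S) (hg : StrictMonoOn g S)
    (hfm : ∀ i ∈ S, f i ∈ Finset.Icc 1 S.card)
    (hgm : ∀ i ∈ S, g i ∈ Finset.Icc 1 S.card) :
    ∀ i ∈ S, f i = g i := by
  have hcard : (Finset.Icc 1 S.card).card = S.card := by rw [Nat.card_Icc]; omega
  have hmem : ∀ t : Fin S.card, S.orderEmbOfFin rfl t ∈ S :=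
    fun t => S.orderEmbOfFin_mem rfl t
  have hmono : StrictMono (S.orderEmbOfFin rfl) := (S.orderEmbOfFin rfl).strictMono
  have hfu := Finset.orderEmbOfFin_unique hcard
    (f := fun t => f (S.orderEmbOfFin rfl t)) (fun t => hfm _ (hmem t))
    (fun a b hab => hf (hmem a) (hmem b) (hmono hab))
  have hgu := Finset.orderEmbOfFin_unique hcard
    (f := fun t => g (S.orderEmbOfFin rfl t)) (fun t => hgm _ (hmem t))
    (fun a b hab => hg (hmem a) (hmem b) (hmono hab))
  intro i hi
  obtain ⟨t, ht⟩ : ∃ t, S.orderEmbOfFin rfl t = i := by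
    have : i ∈ Set.range (S.orderEmbOfFin rfl) := by
      rw [Finset.range_orderEmbOfFin]
      exact hi
    exact this
  rw [← ht]
  exact (congrFun hfu t).trans (congrFun hgu t).symm

lemma cpt_map_cptMon (l₀ l' : List Mon) (h : IndAlph l' ⊆ IndAlph l₀) :
    cpt (l'.map (cptMon l₀)) = cpt l' := by
  have hX : IndAlph (l'.map (cptMon l₀)) = (IndAlph l').image (phi l₀) :=
    IndAlph_map_cptMon l₀ l'
  have hcard : (IndAlph (l'.map (cptMon l₀))).card = (IndAlph l').card := by
    rw [hX]; exact Finset.card_image_of_injective _ (phi_inj l₀)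
  unfold cpt
  rw [List.map_map]
  apply List.map_congr_left
  intro m hm
  apply Subtype.ext
  show Finsupp.mapDomain (phi (l'.map (cptMon l₀))) (Finsupp.mapDomain (phi l₀) m.1)
      = Finsupp.mapDomain (phi l') m.1
  rw [← Finsupp.mapDomain_comp]
  apply Finsupp.mapDomain_congr
  intro i hi
  have hiS : i ∈ IndAlph l' := mem_IndAlph.mpr ⟨m, hm, hi⟩
  refine eqOn_strictMonoOn (IndAlph l') (phi (l'.map (cptMon l₀)) ∘ phi l₀) (phi l')
    ?_ (phi_strictMonoOn l') ?_ (fun j hj => phi_mem_Icc hj) i hiS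
  · intro a ha b hb hab
    rw [Finset.mem_coe] at ha hb
    have hma : phi l₀ a ∈ IndAlph (l'.map (cptMon l₀)) := by
      rw [hX]; exact Finset.mem_image_of_mem _ ha
    have hmb : phi l₀ b ∈ IndAlph (l'.map (cptMon l₀)) := by
      rw [hX]; exact Finset.mem_image_of_mem _ hb
    exact (phi_strictMonoOn _) hma hmb ((phi_strictMonoOn l₀) (h ha) (h hb) hab)
  · intro j hj
    have : phi l₀ j ∈ IndAlph (l'.map (cptMon l₀)) := by
      rw [hX]; exact Finset.mem_image_of_mem _ hj
    have := phi_mem_Icc this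
    rwa [hcard] at this

lemma cpt_length (l : List Mon) : (cpt l).length = l.length := List.length_map ..



/-- shift a finset of positive naturals down by one, dropping `1`. -/
def shiftD (I : Finset ℕ) : Finset ℕ := (I.filter fun i => 2 ≤ i).image (· - 1)

lemma mem_shiftD {I : Finset ℕ} {i : ℕ} : i ∈ shiftD I ↔ i + 1 ∈ I ∧ 1 ≤ i := by
  simp only [shiftD, mem_image, mem_filter]
  constructor
  · rintro ⟨j, ⟨hj, h2⟩, rfl⟩
    have hj1 : j - 1 + 1 = j := by omega
    exact ⟨by rw [hj1]; exact hj, by omega⟩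
  · rintro ⟨h1, h2⟩; exact ⟨i + 1, ⟨h1, by omega⟩, by omega⟩

lemma shiftD_pos {I : Finset ℕ} : ∀ i ∈ shiftD I, 1 ≤ i := fun i hi => (mem_shiftD.mp hi).2

lemma card_shiftD {I : Finset ℕ} (hI : ∀ i ∈ I, 1 ≤ i) :
    (shiftD I).card + (if 1 ∈ I then 1 else 0) = I.card := by
  have h1 : (shiftD I).card = (I.filter fun i => 2 ≤ i).card := by
    apply Finset.card_image_of_injOn
    intro a ha b hb hab
    simp only [mem_coe, mem_filter] at ha hb
    have : a - 1 = b - 1 := hab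
    omega
  have h2 : I.filter (fun i => 2 ≤ i) = I.erase 1 := by
    ext i
    simp only [mem_filter, mem_erase]
    constructor
    · rintro ⟨h, h2⟩; exact ⟨by omega, h⟩
    · rintro ⟨h, h2⟩; have := hI i h2; exact ⟨h2, by omega⟩
  rw [h1, h2]
  by_cases h : 1 ∈ I
  · rw [if_pos h, Finset.card_erase_of_mem h]
    have : 0 < I.card := Finset.card_pos.mpr ⟨1, h⟩
    omega
  · rw [if_neg h, Finset.erase_eq_of_notMem h, add_zero]

/-- the 1-based rank of `a` in `S`. -/
def rk (S : Finset ℕ) (a : ℕ) : ℕ := (S.filter (· ≤ a)).card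

def pick (S J : Finset ℕ) : Finset ℕ := S.filter fun a => rk S a ∈ J

lemma pick_subset (S J : Finset ℕ) : pick S J ⊆ S := Finset.filter_subset _ _

lemma rk_pos {S : Finset ℕ} {a : ℕ} (ha : a ∈ S) : 1 ≤ rk S a := by
  have : a ∈ S.filter (· ≤ a) := mem_filter.mpr ⟨ha, le_refl a⟩
  exact Finset.card_pos.mpr ⟨a, this⟩

lemma rk_le_card (S : Finset ℕ) (a : ℕ) : rk S a ≤ S.card :=
  Finset.card_le_card (Finset.filter_subset _ _)

lemma rk_mem_Icc {S : Finset ℕ} {a : ℕ} (ha : a ∈ S) : rk S a ∈ Finset.Icc 1 S.card :=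
  Finset.mem_Icc.mpr ⟨rk_pos ha, rk_le_card S a⟩

lemma rk_one {S : Finset ℕ} (hS : ∀ i ∈ S, 1 ≤ i) (h1 : 1 ∈ S) : rk S 1 = 1 := by
  have : S.filter (· ≤ 1) = {1} := by
    ext i
    simp only [mem_filter, mem_singleton]
    constructor
    · rintro ⟨hi, hle⟩; have := hS i hi; omega
    · rintro rfl; exact ⟨h1, le_refl 1⟩
  rw [rk, this, Finset.card_singleton]

lemma rk_succ {S : Finset ℕ} (hS : ∀ i ∈ S, 1 ≤ i) (a : ℕ) :
    rk S (a + 1) = rk (shiftD S) a + (if 1 ∈ S then 1 else 0) := by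
  have hT : shiftD (S.filter (· ≤ a + 1)) = (shiftD S).filter (· ≤ a) := by
    ext i
    simp only [mem_shiftD, mem_filter]
    constructor
    · rintro ⟨⟨h1, h2⟩, h3⟩; exact ⟨⟨h1, h3⟩, by omega⟩
    · rintro ⟨⟨h1, h3⟩, h2⟩; exact ⟨⟨h1, by omega⟩, h3⟩
  have hpos : ∀ i ∈ S.filter (· ≤ a + 1), 1 ≤ i := fun i hi => hS i (mem_filter.mp hi).1
  have := card_shiftD hpos
  rw [hT] at this
  have h1 : (1 ∈ S.filter (· ≤ a + 1)) ↔ 1 ∈ S := by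
    simp [mem_filter]
  rw [rk, rk, ← this]
  congr 1
  simp [h1]

lemma one_mem_pick {S J : Finset ℕ} (hS : ∀ i ∈ S, 1 ≤ i) (h1 : 1 ∈ S) :
    (1 ∈ pick S J) ↔ 1 ∈ J := by
  simp [pick, mem_filter, h1, rk_one hS h1]

lemma shiftD_pick_of_mem {S J : Finset ℕ} (hS : ∀ i ∈ S, 1 ≤ i) (h1 : 1 ∈ S) :
    shiftD (pick S J) = pick (shiftD S) (shiftD J) := by
  ext i
  simp only [mem_shiftD, pick, mem_filter]
  have hrs := rk_succ hS i
  rw [if_pos h1] at hrs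
  constructor
  · rintro ⟨⟨hiS, hrk⟩, hi1⟩
    have hmem : 1 ≤ rk (shiftD S) i := rk_pos (mem_shiftD.mpr ⟨hiS, hi1⟩)
    rw [hrs] at hrk
    exact ⟨⟨hiS, hi1⟩, hrk, hmem⟩
  · rintro ⟨⟨hiS, hi1⟩, hrk1, _⟩
    exact ⟨⟨hiS, by rw [hrs]; exact hrk1⟩, hi1⟩

lemma shiftD_pick_of_not_mem {S J : Finset ℕ} (hS : ∀ i ∈ S, 1 ≤ i) (h1 : 1 ∉ S) :
    shiftD (pick S J) = pick (shiftD S) J := by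
  ext i
  simp only [mem_shiftD, pick, mem_filter]
  have hr : ∀ i, rk S (i + 1) = rk (shiftD S) i := by
    intro i; rw [rk_succ hS, if_neg h1]; omega
  constructor
  · rintro ⟨⟨hiS, hrk⟩, hi1⟩
    exact ⟨⟨hiS, hi1⟩, by rw [← hr]; exact hrk⟩
  · rintro ⟨⟨hiS, hi1⟩, hrk⟩
    exact ⟨⟨hiS, by rw [hr]; exact hrk⟩, hi1⟩

lemma rk_strictMonoOn (S : Finset ℕ) : StrictMonoOn (rk S) S := by
  intro a ha b hb hab
  apply Finset.card_lt_card
  constructor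
  · intro x hx
    simp only [mem_filter] at hx ⊢
    exact ⟨hx.1, le_trans hx.2 (le_of_lt hab)⟩
  · intro hcon
    have : b ∈ S.filter (· ≤ a) := hcon (mem_filter.mpr ⟨hb, le_refl b⟩)
    have := (mem_filter.mp this).2
    omega

lemma rk_injOn (S : Finset ℕ) : Set.InjOn (rk S) S := (rk_strictMonoOn S).injOn

lemma image_rk (S : Finset ℕ) : S.image (rk S) = Finset.Icc 1 S.card := by
  apply Finset.eq_of_subset_of_card_le
  · intro t ht
    obtain ⟨a, ha, rfl⟩ := mem_image.mp ht
    exact rk_mem_Icc ha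
  · rw [Nat.card_Icc, Finset.card_image_of_injOn (rk_injOn S)]
    omega

lemma pick_image {S A : Finset ℕ} (hA : A ⊆ S) : pick S (A.image (rk S)) = A := by
  ext a
  simp only [pick, mem_filter, mem_image]
  constructor
  · rintro ⟨ha, b, hb, hab⟩
    rwa [← rk_injOn S (hA hb) ha hab]
  · intro ha; exact ⟨hA ha, a, ha, rfl⟩

lemma image_pick {S J : Finset ℕ} (hJ : J ⊆ Finset.Icc 1 S.card) :
    (pick S J).image (rk S) = J := by
  ext t
  simp only [mem_image, pick, mem_filter]
  constructor
  · rintro ⟨a, ⟨ha, hrk⟩, rfl⟩; exact hrk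
  · intro ht
    have : t ∈ S.image (rk S) := by rw [image_rk]; exact hJ ht
    obtain ⟨a, ha, rfl⟩ := mem_image.mp this
    exact ⟨a, ⟨ha, ht⟩, rfl⟩

lemma pick_compl {S J : Finset ℕ} :
    pick S (Finset.Icc 1 S.card \ J) = S \ pick S J := by
  ext a
  simp only [pick, mem_filter, mem_sdiff, Finset.mem_Icc]
  constructor
  · rintro ⟨ha, ⟨_, hnJ⟩⟩; exact ⟨ha, fun h => hnJ h.2⟩
  · rintro ⟨ha, h⟩
    have := rk_mem_Icc ha
    rw [Finset.mem_Icc] at this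
    exact ⟨ha, this, fun hJ => h ⟨ha, hJ⟩⟩


lemma sub_nil (I : Finset ℕ) : sub [] I = [] := by simp [sub]

lemma sub_cons (a : Mon) (l : List Mon) (I : Finset ℕ) :
    sub (a :: l) I = (if 1 ∈ I then [a] else []) ++ sub l (shiftD I) := by
  unfold sub
  rw [List.length_cons, List.range_succ_eq_map, List.filterMap_cons, List.filterMap_map]
  have hfun : ∀ j ∈ List.range l.length,
      ((fun j => if j + 1 ∈ I then (a :: l)[j]? else none) ∘ (· + 1)) j
        = (fun j => if j + 1 ∈ shiftD I then l[j]? else none) j := by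
    intro j _
    simp only [Function.comp_apply, mem_shiftD, List.getElem?_cons_succ]
    congr 1
    simp only [eq_iff_iff]
    exact ⟨fun h => ⟨h, by omega⟩, fun h => h.1⟩
  rw [List.filterMap_congr hfun]
  by_cases h1 : 1 ∈ I
  · simp [h1]
  · simp [h1]

lemma sub_length : ∀ (l : List Mon) (I : Finset ℕ), I ⊆ Finset.Icc 1 l.length →
    (sub l I).length = I.card := by
  intro l
  induction l with
  | nil =>
    intro I hI
    have : I = ∅ := by
      apply Finset.eq_empty_of_forall_notMem
      intro i hi
      have := hI hi
      simp at this
    simp [this, sub_nil]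
  | cons a l ih =>
    intro I hI
    have hpos : ∀ i ∈ I, 1 ≤ i := fun i hi => (Finset.mem_Icc.mp (hI hi)).1
    have hsub : shiftD I ⊆ Finset.Icc 1 l.length := by
      intro i hi
      rw [mem_shiftD] at hi
      have := Finset.mem_Icc.mp (hI hi.1)
      rw [Finset.mem_Icc]
      simp at this ⊢
      omega
    rw [sub_cons, List.length_append, ih _ hsub, ← card_shiftD hpos]
    by_cases h1 : 1 ∈ I <;> simp [h1] <;> omega

lemma sub_map (l : List Mon) (f : Mon → Mon) (I : Finset ℕ) :
    sub (l.map f) I = (sub l I).map f := by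
  unfold sub
  rw [List.length_map, List.map_filterMap]
  apply List.filterMap_congr
  intro j _
  by_cases h : j + 1 ∈ I <;> simp [h, List.getElem?_map]

lemma sub_sub : ∀ (l : List Mon) (S J : Finset ℕ), (∀ i ∈ S, 1 ≤ i) →
    sub (sub l S) J = sub l (pick S J) := by
  intro l
  induction l with
  | nil => intro S J _; simp [sub_nil]
  | cons a l ih =>
    intro S J hS
    have hS' : ∀ i ∈ shiftD S, 1 ≤ i := fun i hi => (mem_shiftD.mp hi).2
    rw [sub_cons a l S, sub_cons a l (pick S J)]
    by_cases h1 : 1 ∈ S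
    · rw [if_pos h1]
      have : ([a] ++ sub l (shiftD S)) = a :: sub l (shiftD S) := rfl
      rw [this, sub_cons, ih _ _ hS']
      simp only [one_mem_pick hS h1, shiftD_pick_of_mem hS h1]
    · rw [if_neg h1, if_neg (fun h => h1 (pick_subset S J h)), List.nil_append,
        List.nil_append, ih _ _ hS', shiftD_pick_of_not_mem hS h1]

lemma mem_sub {m : Mon} {l : List Mon} {I : Finset ℕ} :
    m ∈ sub l I ↔ ∃ j, j + 1 ∈ I ∧ l[j]? = some m := by
  unfold sub
  simp only [List.mem_filterMap, List.mem_range]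
  constructor
  · rintro ⟨j, hj, hsome⟩
    by_cases h : j + 1 ∈ I
    · rw [if_pos h] at hsome; exact ⟨j, h, hsome⟩
    · rw [if_neg h] at hsome; exact absurd hsome (by simp)
  · rintro ⟨j, hj, hsome⟩
    have hlt : j < l.length := by
      by_contra h
      rw [List.getElem?_eq_none (by omega)] at hsome
      exact absurd hsome (by simp)
    exact ⟨j, hlt, by rw [if_pos hj]; exact hsome⟩

lemma cpt_sub_cpt (l : List Mon) (I J : Finset ℕ) (hI : I ⊆ Finset.Icc 1 l.length) :
    cpt (sub (cpt (sub l I)) J) = cpt (sub l (pick I J)) := by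
  have hpos : ∀ i ∈ I, 1 ≤ i := fun i hi => (Finset.mem_Icc.mp (hI hi)).1
  show cpt (sub ((sub l I).map (cptMon (sub l I))) J) = cpt (sub l (pick I J))
  rw [sub_map, sub_sub l I J hpos]
  apply cpt_map_cptMon
  apply IndAlph_subset
  intro m hm
  obtain ⟨j, hj, hsome⟩ := mem_sub.mp hm
  exact mem_sub.mpr ⟨j, pick_subset I J hj, hsome⟩

end Mon

/-- The free `k`-module on the set of lists of monomials. -/
abbrev FreeL (k : Type*) [CommRing k] : Type _ := (List Mon) →₀ k

/-- The coproduct `Δ_list`, defined on a basis list `l` of length `n` by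
`Δ_list l = Σ_{I ⊆ {1..n}} cpt (l[I]) ⊗ cpt (l[{1..n} \ I])`. -/
noncomputable def deltaList (k : Type*) [CommRing k] :
    FreeL k →ₗ[k] TensorProduct k (FreeL k) (FreeL k) :=
  Finsupp.lift _ k _ fun l =>
    ∑ I ∈ (Finset.Icc 1 l.length).powerset,
      Finsupp.single (Mon.cpt (Mon.sub l I)) (1 : k) ⊗ₜ[k]
        Finsupp.single (Mon.cpt (Mon.sub l (Finset.Icc 1 l.length \ I))) (1 : k)

/-- The bilinear extension of the shifted concatenation to the free module. -/
noncomputable def sconcL (k : Type*) [CommRing k] : FreeL k →ₗ[k] FreeL k →ₗ[k] FreeL k :=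
  Finsupp.lift _ k _ fun u => Finsupp.lift _ k _ fun v => Finsupp.single (Mon.sconc u v) (1 : k)

open Classical in
/-- The counit: coefficient of the empty list. -/
noncomputable def epsL (k : Type*) [CommRing k] : FreeL k →ₗ[k] k :=
  Finsupp.lift _ k _ fun l => if l = ([] : List Mon) then (1 : k) else 0



open Mon Finset in
lemma deltaList_single (k : Type*) [CommRing k] (l : List Mon) :
    deltaList k (Finsupp.single l (1 : k)) =
      ∑ I ∈ (Finset.Icc 1 l.length).powerset,
        Finsupp.single (cpt (sub l I)) (1 : k) ⊗ₜ[k]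
          Finsupp.single (cpt (sub l (Finset.Icc 1 l.length \ I))) (1 : k) := by
  rw [deltaList, Finsupp.lift_apply, Finsupp.sum_single_index (by simp), one_smul]

open Mon Finset in
lemma deltaList_single_cpt (k : Type*) [CommRing k] (l : List Mon) (I : Finset ℕ)
    (hI : I ⊆ Finset.Icc 1 l.length) :
    deltaList k (Finsupp.single (cpt (sub l I)) (1 : k)) =
      ∑ A ∈ I.powerset,
        Finsupp.single (cpt (sub l A)) (1 : k) ⊗ₜ[k]
          Finsupp.single (cpt (sub l (I \ A))) (1 : k) := by
  have hlen : (cpt (sub l I)).length = I.card := by rw [cpt_length, sub_length l I hI]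
  rw [deltaList_single, hlen]
  refine Finset.sum_bij' (i := fun J _ => pick I J) (j := fun A _ => A.image (rk I))
    ?_ ?_ ?_ ?_ ?_
  · intro J hJ
    exact Finset.mem_powerset.mpr (pick_subset I J)
  · intro A hA
    rw [Finset.mem_powerset] at hA ⊢
    rw [← image_rk I]
    exact Finset.image_subset_image hA
  · intro J hJ
    exact image_pick (Finset.mem_powerset.mp hJ)
  · intro A hA
    exact pick_image (Finset.mem_powerset.mp hA)
  · intro J hJ
    rw [cpt_sub_cpt l I J hI, cpt_sub_cpt l I _ hI, pick_compl]

set_option synthInstance.maxHeartbeats 1000000 in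
set_option maxHeartbeats 1000000 in
open Mon Finset in
/-- ** Statement 8 **: the coproduct is coassociative. -/
theorem deltaList_coassoc (k : Type*) [CommRing k] (x : FreeL k) :
    (TensorProduct.assoc k (FreeL k) (FreeL k) (FreeL k))
        ((TensorProduct.map (deltaList k) (LinearMap.id : FreeL k →ₗ[k] FreeL k))
          ((deltaList k) x))
      = (TensorProduct.map (LinearMap.id : FreeL k →ₗ[k] FreeL k) (deltaList k))
          ((deltaList k) x) := by
  have hmain : ∀ l : List Mon,
      (TensorProduct.assoc k (FreeL k) (FreeL k) (FreeL k))
          ((TensorProduct.map (deltaList k) (LinearMap.id : FreeL k →ₗ[k] FreeL k))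
            ((deltaList k) (Finsupp.single l (1 : k))))
        = (TensorProduct.map (LinearMap.id : FreeL k →ₗ[k] FreeL k) (deltaList k))
            ((deltaList k) (Finsupp.single l (1 : k))) := by
    intro l
    have hL :
        (TensorProduct.assoc k (FreeL k) (FreeL k) (FreeL k))
            ((TensorProduct.map (deltaList k) (LinearMap.id : FreeL k →ₗ[k] FreeL k))
              ((deltaList k) (Finsupp.single l (1 : k))))
          = ∑ I ∈ (Finset.Icc 1 l.length).powerset, ∑ A ∈ I.powerset,
              Finsupp.single (cpt (sub l A)) (1 : k) ⊗ₜ[k]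
                (Finsupp.single (cpt (sub l (I \ A))) (1 : k) ⊗ₜ[k]
                  Finsupp.single (cpt (sub l (Finset.Icc 1 l.length \ I))) (1 : k)) := by
      rw [deltaList_single, map_sum, map_sum]
      refine Finset.sum_congr rfl fun I hI => ?_
      rw [Finset.mem_powerset] at hI
      rw [TensorProduct.map_tmul, LinearMap.id_coe, id_eq,
        deltaList_single_cpt k l I hI, TensorProduct.sum_tmul, map_sum]
      exact Finset.sum_congr rfl fun A hA => TensorProduct.assoc_tmul _ _ _
    have hR :
        (TensorProduct.map (LinearMap.id : FreeL k →ₗ[k] FreeL k) (deltaList k))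
            ((deltaList k) (Finsupp.single l (1 : k)))
          = ∑ I ∈ (Finset.Icc 1 l.length).powerset, ∑ C ∈ (Finset.Icc 1 l.length \ I).powerset,
              Finsupp.single (cpt (sub l I)) (1 : k) ⊗ₜ[k]
                (Finsupp.single (cpt (sub l C)) (1 : k) ⊗ₜ[k]
                  Finsupp.single (cpt (sub l ((Finset.Icc 1 l.length \ I) \ C))) (1 : k)) := by
      rw [deltaList_single, map_sum]
      refine Finset.sum_congr rfl fun I hI => ?_
      rw [TensorProduct.map_tmul, LinearMap.id_coe, id_eq,
        deltaList_single_cpt k l (Finset.Icc 1 l.length \ I) Finset.sdiff_subset,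
        TensorProduct.tmul_sum]
    rw [hL, hR, Finset.sum_sigma', Finset.sum_sigma']
    refine Finset.sum_bij'
      (i := fun p _ => (⟨p.2, p.1 \ p.2⟩ : Σ _ : Finset ℕ, Finset ℕ))
      (j := fun p _ => (⟨p.1 ∪ p.2, p.1⟩ : Σ _ : Finset ℕ, Finset ℕ)) ?_ ?_ ?_ ?_ ?_
    · rintro ⟨I, A⟩ hp
      rw [Finset.mem_sigma, Finset.mem_powerset, Finset.mem_powerset] at hp
      obtain ⟨hI, hA⟩ := hp
      rw [Finset.mem_sigma, Finset.mem_powerset, Finset.mem_powerset]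
      constructor
      · exact hA.trans hI
      · intro x hx
        rw [Finset.mem_sdiff] at hx ⊢
        exact ⟨hI hx.1, hx.2⟩
    · rintro ⟨A, C⟩ hp
      rw [Finset.mem_sigma, Finset.mem_powerset, Finset.mem_powerset] at hp
      obtain ⟨hA, hC⟩ := hp
      rw [Finset.mem_sigma, Finset.mem_powerset, Finset.mem_powerset]
      refine ⟨Finset.union_subset hA (hC.trans Finset.sdiff_subset), Finset.subset_union_left⟩
    · rintro ⟨I, A⟩ hp
      rw [Finset.mem_sigma, Finset.mem_powerset, Finset.mem_powerset] at hp
      obtain ⟨hI, hA⟩ := hp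
      dsimp only
      rw [Finset.union_sdiff_of_subset hA]
    · rintro ⟨A, C⟩ hp
      rw [Finset.mem_sigma, Finset.mem_powerset, Finset.mem_powerset] at hp
      obtain ⟨hA, hC⟩ := hp
      have hdisj : Disjoint A C := by
        rw [Finset.disjoint_left]
        intro x hxA hxC
        exact (Finset.mem_sdiff.mp (hC hxC)).2 hxA
      dsimp only
      rw [Finset.union_sdiff_cancel_left hdisj]
    · rintro ⟨I, A⟩ hp
      rw [Finset.mem_sigma, Finset.mem_powerset, Finset.mem_powerset] at hp
      obtain ⟨hI, hA⟩ := hp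
      have h3 : Finset.Icc 1 l.length \ I = (Finset.Icc 1 l.length \ A) \ (I \ A) := by
        ext x
        simp only [Finset.mem_sdiff]
        have := @hA x
        have := @hI x
        tauto
      rw [h3]
  induction x using Finsupp.induction_linear with
  | zero => simp only [map_zero]
  | add f g hf hg => simp only [map_add, hf, hg]
  | single l b =>
    have hb : (Finsupp.single l b : FreeL k) = b • Finsupp.single l (1 : k) := by
      rw [Finsupp.smul_single, smul_eq_mul, mul_one]
    simp only [hb, map_smul, hmain l]
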